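/- Let Ω be a finite probability space and let W, Y_1, …, Y_{N_r} be random variables on Ω such that H(W) = L log q, I(W; Y_1, …, Y_T) = 0, H(W | Y_1, …, Y_{N_r}) = 0, and each Y_n takes values in a set of cardinality at most q^{L_Y}. Then L ≤ (N_r − T) · L_Y. -/

import Mathlib

open Finset

variable {Ω : Type} [Fintype Ω]

/-- Probability that the random variable `X` takes the value `s`, for the
probability mass function `p` on the finite sample space `Ω`. -/
def probOf {S : Type} [DecidableEq S] (p : Ω → ℝ) (X : Ω → S) (s : S) : ℝ :=
  ∑ ω ∈ Finset.univ.filter (fun ω => X ω = s), p ω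

/-- Shannon entropy (natural-log units) of a random variable `X` on the finite
probability space `(Ω, p)` (with the convention `0 · log 0 = 0`, which holds
definitionally since `Real.log 0 = 0`). -/
noncomputable def entropy {S : Type} [Fintype S] [DecidableEq S]
    (p : Ω → ℝ) (X : Ω → S) : ℝ :=
  -∑ s : S, probOf p X s * Real.log (probOf p X s)

/-- Conditional Shannon entropy `H(X | Y) = H(X, Y) − H(Y)`. -/
noncomputable def condEntropy {S T : Type} [Fintype S] [DecidableEq S]
    [Fintype T] [DecidableEq T] (p : Ω → ℝ) (X : Ω → S) (Y : Ω → T) : ℝ :=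
  entropy p (fun ω => (X ω, Y ω)) - entropy p Y

/-- Mutual information `I(X ; Y) = H(X) + H(Y) − H(X, Y)`. -/
noncomputable def mutualInfo {S T : Type} [Fintype S] [DecidableEq S]
    [Fintype T] [DecidableEq T] (p : Ω → ℝ) (X : Ω → S) (Y : Ω → T) : ℝ :=
  entropy p X + entropy p Y - entropy p (fun ω => (X ω, Y ω))


section AuxLemmas

variable {Ω : Type} [Fintype Ω] (p : Ω → ℝ)

lemma probOf_nonneg' {S : Type} [DecidableEq S] (hp : ∀ ω, 0 ≤ p ω)
    (X : Ω → S) (s : S) : 0 ≤ probOf p X s :=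
  Finset.sum_nonneg fun ω _ => hp ω

lemma sum_probOf' {S : Type} [Fintype S] [DecidableEq S] (X : Ω → S) :
    ∑ s : S, probOf p X s = ∑ ω : Ω, p ω := by
  classical
  exact Finset.sum_fiberwise_of_maps_to (fun ω _ => Finset.mem_univ (X ω)) p

lemma marginal_fst' {S T : Type} [Fintype S] [DecidableEq S] [Fintype T] [DecidableEq T]
    (X : Ω → S) (Z : Ω → T) (s : S) :
    ∑ t : T, probOf p (fun ω => (X ω, Z ω)) (s, t) = probOf p X s := by
  classical
  unfold probOf
  rw [← Finset.sum_fiberwise_of_maps_to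
    (s := Finset.univ.filter (fun ω => X ω = s)) (g := Z)
    (fun ω _ => Finset.mem_univ (Z ω)) p]
  refine Finset.sum_congr rfl fun t _ => ?_
  congr 1
  ext ω
  simp [Prod.ext_iff, and_comm]

lemma marginal_snd' {S T : Type} [Fintype S] [DecidableEq S] [Fintype T] [DecidableEq T]
    (X : Ω → S) (Z : Ω → T) (t : T) :
    ∑ s : S, probOf p (fun ω => (X ω, Z ω)) (s, t) = probOf p Z t := by
  classical
  unfold probOf
  rw [← Finset.sum_fiberwise_of_maps_to
    (s := Finset.univ.filter (fun ω => Z ω = t)) (g := X)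
    (fun ω _ => Finset.mem_univ (X ω)) p]
  refine Finset.sum_congr rfl fun s _ => ?_
  congr 1
  ext ω
  simp [Prod.ext_iff, and_comm]

lemma probOf_pair_le_fst' {S T : Type} [DecidableEq S] [DecidableEq T]
    (hp : ∀ ω, 0 ≤ p ω) (X : Ω → S) (Z : Ω → T) (s : S) (t : T) :
    probOf p (fun ω => (X ω, Z ω)) (s, t) ≤ probOf p X s := by
  unfold probOf
  refine Finset.sum_le_sum_of_subset_of_nonneg ?_ (fun ω _ _ => hp ω)
  intro ω hω
  simp only [Finset.mem_filter, Finset.mem_univ, true_and, Prod.ext_iff] at hω ⊢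
  exact hω.1

lemma probOf_pair_le_snd' {S T : Type} [DecidableEq S] [DecidableEq T]
    (hp : ∀ ω, 0 ≤ p ω) (X : Ω → S) (Z : Ω → T) (s : S) (t : T) :
    probOf p (fun ω => (X ω, Z ω)) (s, t) ≤ probOf p Z t := by
  unfold probOf
  refine Finset.sum_le_sum_of_subset_of_nonneg ?_ (fun ω _ _ => hp ω)
  intro ω hω
  simp only [Finset.mem_filter, Finset.mem_univ, true_and, Prod.ext_iff] at hω ⊢
  exact hω.2

lemma entropy_le_log_card' {S : Type} [Fintype S] [DecidableEq S]
    (hp : ∀ ω, 0 ≤ p ω) (hp1 : ∑ ω : Ω, p ω = 1) (X : Ω → S) :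
    entropy p X ≤ Real.log (Fintype.card S) := by
  classical
  rcases Nat.eq_zero_or_pos (Fintype.card S) with h0 | hpos
  · have : IsEmpty S := Fintype.card_eq_zero_iff.mp h0
    simp [entropy, h0]
  have hn : (0:ℝ) < (Fintype.card S : ℝ) := by exact_mod_cast hpos
  set n : ℝ := (Fintype.card S : ℝ) with hn_def
  have hsum : ∑ s : S, probOf p X s = 1 := by rw [sum_probOf', hp1]
  have key : ∑ s : S, probOf p X s * (-(Real.log (probOf p X s)) - Real.log n) ≤ 0 := by
    have hterm : ∀ s : S, probOf p X s * (-(Real.log (probOf p X s)) - Real.log n)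
        ≤ 1 / n - probOf p X s := by
      intro s
      set a := probOf p X s with ha_def
      have ha : 0 ≤ a := probOf_nonneg' p hp X s
      rcases eq_or_lt_of_le ha with h | h
      · rw [← h]
        simp [le_div_iff₀ hn, hn.le]
      · have hx : (0:ℝ) < (a * n)⁻¹ := by positivity
        have hlog := Real.log_le_sub_one_of_pos hx
        have : -(Real.log a) - Real.log n = Real.log (a * n)⁻¹ := by
          rw [Real.log_inv, Real.log_mul (ne_of_gt h) (ne_of_gt hn)]
          ring
        rw [this]
        have := mul_le_mul_of_nonneg_left hlog ha
        calc a * Real.log (a*n)⁻¹ ≤ a * ((a*n)⁻¹ - 1) := this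
          _ = 1/n - a := by field_simp
    calc ∑ s : S, probOf p X s * (-(Real.log (probOf p X s)) - Real.log n)
        ≤ ∑ s : S, (1 / n - probOf p X s) := Finset.sum_le_sum fun s _ => hterm s
      _ = (Fintype.card S : ℝ) * (1/n) - 1 := by
          rw [Finset.sum_sub_distrib, hsum, Finset.sum_const, Finset.card_univ,
            nsmul_eq_mul]
      _ = 0 := by field_simp; simp [hn_def]
  have expand : ∑ s : S, probOf p X s * (-(Real.log (probOf p X s)) - Real.log n)
      = entropy p X - Real.log n := by
    unfold entropy
    have hterm : ∀ s : S, probOf p X s * (-(Real.log (probOf p X s)) - Real.log n)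
        = -(probOf p X s * Real.log (probOf p X s)) - probOf p X s * Real.log n := by
      intro s; ring
    rw [Finset.sum_congr rfl (fun s _ => hterm s), Finset.sum_sub_distrib,
      Finset.sum_neg_distrib, ← Finset.sum_mul, hsum, one_mul]
  linarith [key, expand]

end AuxLemmas

section AuxLemmas2

variable {Ω : Type} [Fintype Ω] (p : Ω → ℝ)

lemma entropy_le_entropy_pair' {S T : Type} [Fintype S] [DecidableEq S]
    [Fintype T] [DecidableEq T] (hp : ∀ ω, 0 ≤ p ω) (X : Ω → S) (Z : Ω → T) :
    entropy p X ≤ entropy p (fun ω => (X ω, Z ω)) := by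
  classical
  unfold entropy
  rw [Fintype.sum_prod_type, neg_le_neg_iff]
  refine Finset.sum_le_sum fun s _ => ?_
  have hmarg := marginal_fst' p X Z s
  calc ∑ t : T, probOf p (fun ω => (X ω, Z ω)) (s, t) * Real.log (probOf p (fun ω => (X ω, Z ω)) (s, t))
      ≤ ∑ t : T, probOf p (fun ω => (X ω, Z ω)) (s, t) * Real.log (probOf p X s) := by
        refine Finset.sum_le_sum fun t _ => ?_
        set P := probOf p (fun ω => (X ω, Z ω)) (s, t) with hP
        have hP0 : 0 ≤ P := probOf_nonneg' p hp _ _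
        rcases eq_or_lt_of_le hP0 with h | h
        · simp [← h]
        · exact mul_le_mul_of_nonneg_left
            (Real.log_le_log h (probOf_pair_le_fst' p hp X Z s t)) hP0
    _ = probOf p X s * Real.log (probOf p X s) := by
        rw [← Finset.sum_mul, hmarg]

lemma entropy_pair_le_add' {S T : Type} [Fintype S] [DecidableEq S]
    [Fintype T] [DecidableEq T] (hp : ∀ ω, 0 ≤ p ω) (hp1 : ∑ ω : Ω, p ω = 1)
    (X : Ω → S) (Z : Ω → T) :
    entropy p (fun ω => (X ω, Z ω)) ≤ entropy p X + entropy p Z := by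
  classical
  set P := probOf p (fun ω => (X ω, Z ω)) with hP_def
  set a := probOf p X with ha_def
  set b := probOf p Z with hb_def
  have hPsum : ∑ st : S × T, P st = 1 := by rw [hP_def, sum_probOf', hp1]
  have hasum : ∑ s : S, a s = 1 := by rw [ha_def, sum_probOf', hp1]
  have hbsum : ∑ t : T, b t = 1 := by rw [hb_def, sum_probOf', hp1]
  -- key pointwise inequality
  have key : ∑ st : S × T, (P st * Real.log (a st.1 * b st.2) - P st * Real.log (P st)) ≤ 0 := by
    have hterm : ∀ st : S × T, P st * Real.log (a st.1 * b st.2) - P st * Real.log (P st)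
        ≤ a st.1 * b st.2 - P st := by
      rintro ⟨s, t⟩
      have hP0 : 0 ≤ P (s, t) := probOf_nonneg' p hp _ _
      have ha0 : 0 ≤ a s := probOf_nonneg' p hp _ _
      have hb0 : 0 ≤ b t := probOf_nonneg' p hp _ _
      rcases eq_or_lt_of_le hP0 with h | h
      · simp only [← h, zero_mul, sub_zero, mul_zero, sub_self]
        positivity
      · have hale : P (s, t) ≤ a s := probOf_pair_le_fst' p hp X Z s t
        have hble : P (s, t) ≤ b t := probOf_pair_le_snd' p hp X Z s t
        have ha' : 0 < a s := lt_of_lt_of_le h hale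
        have hb' : 0 < b t := lt_of_lt_of_le h hble
        have hx : (0:ℝ) < a s * b t * (P (s,t))⁻¹ := by positivity
        have hlog := Real.log_le_sub_one_of_pos hx
        rw [Real.log_mul (by positivity) (by positivity), Real.log_inv] at hlog
        have := mul_le_mul_of_nonneg_left hlog hP0
        calc P (s,t) * Real.log (a s * b t) - P (s,t) * Real.log (P (s,t))
            = P (s,t) * (Real.log (a s * b t) + -Real.log (P (s,t))) := by ring
          _ ≤ P (s,t) * (a s * b t * (P (s,t))⁻¹ - 1) := this
          _ = a s * b t - P (s,t) := by field_simp
    calc ∑ st : S × T, (P st * Real.log (a st.1 * b st.2) - P st * Real.log (P st))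
        ≤ ∑ st : S × T, (a st.1 * b st.2 - P st) := Finset.sum_le_sum fun st _ => hterm st
      _ = (∑ s : S, a s) * (∑ t : T, b t) - 1 := by
          rw [Finset.sum_sub_distrib, hPsum, Fintype.sum_prod_type, Finset.sum_mul_sum]
      _ = 0 := by rw [hasum, hbsum]; ring
  -- identify the sum with entropies
  have hsplit : ∑ st : S × T, P st * Real.log (a st.1 * b st.2)
      = -entropy p X - entropy p Z := by
    have hterm : ∀ st : S × T, P st * Real.log (a st.1 * b st.2)
        = P st * Real.log (a st.1) + P st * Real.log (b st.2) := by
      rintro ⟨s, t⟩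
      have hP0 : 0 ≤ P (s, t) := probOf_nonneg' p hp _ _
      rcases eq_or_lt_of_le hP0 with h | h
      · simp [← h]
      · have ha' : 0 < a s := lt_of_lt_of_le h (probOf_pair_le_fst' p hp X Z s t)
        have hb' : 0 < b t := lt_of_lt_of_le h (probOf_pair_le_snd' p hp X Z s t)
        rw [Real.log_mul (ne_of_gt ha') (ne_of_gt hb'), mul_add]
    rw [Finset.sum_congr rfl (fun st _ => hterm st), Finset.sum_add_distrib]
    have h1 : ∑ st : S × T, P st * Real.log (a st.1) = ∑ s : S, a s * Real.log (a s) := by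
      rw [Fintype.sum_prod_type]
      refine Finset.sum_congr rfl fun s _ => ?_
      dsimp only
      rw [← Finset.sum_mul, marginal_fst' p X Z s]
    have h2 : ∑ st : S × T, P st * Real.log (b st.2) = ∑ t : T, b t * Real.log (b t) := by
      rw [Fintype.sum_prod_type_right]
      refine Finset.sum_congr rfl fun t _ => ?_
      dsimp only
      rw [← Finset.sum_mul, marginal_snd' p X Z t]
    rw [h1, h2]
    unfold entropy
    ring
  have hpair : ∑ st : S × T, P st * Real.log (P st) = -entropy p (fun ω => (X ω, Z ω)) := by
    unfold entropy; ring
  rw [Finset.sum_sub_distrib, hsplit, hpair] at key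
  linarith

lemma entropy_comp_inj' {S T : Type} [Fintype S] [DecidableEq S]
    [Fintype T] [DecidableEq T] {f : S → T} (hf : Function.Injective f) (X : Ω → S) :
    entropy p (fun ω => f (X ω)) = entropy p X := by
  classical
  unfold entropy
  congr 1
  rw [← Finset.sum_subset (Finset.subset_univ (Finset.univ.image f))]
  · rw [Finset.sum_image (fun s _ s' _ h => hf h)]
    refine Finset.sum_congr rfl fun s _ => ?_
    have : probOf p (fun ω => f (X ω)) (f s) = probOf p X s := by
      unfold probOf
      congr 1
      ext ω
      simp [hf.eq_iff]
    rw [this]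
  · intro t _ ht
    have : probOf p (fun ω => f (X ω)) t = 0 := by
      unfold probOf
      apply Finset.sum_eq_zero
      intro ω hω
      simp only [Finset.mem_filter, Finset.mem_univ, true_and] at hω
      exact absurd (Finset.mem_image.mpr ⟨X ω, Finset.mem_univ _, hω⟩) ht
    rw [this]
    simp

lemma entropy_comp_le' {S T : Type} [Fintype S] [DecidableEq S]
    [Fintype T] [DecidableEq T] (hp : ∀ ω, 0 ≤ p ω) (k : S → T) (X : Ω → S) :
    entropy p (fun ω => k (X ω)) ≤ entropy p X := by
  have h1 : entropy p (fun ω => k (X ω)) ≤ entropy p (fun ω => (k (X ω), X ω)) :=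
    entropy_le_entropy_pair' p hp (fun ω => k (X ω)) X
  have h2 : entropy p (fun ω => (k (X ω), X ω)) = entropy p X :=
    entropy_comp_inj' p (f := fun s => (k s, s)) (fun s s' h => (Prod.ext_iff.mp h).2) X
  linarith

end AuxLemmas2

/-- Converse bound for the helper-to-master rate. If
`H(W) = L log q`, `W` is independent of the first `T` responses, `W` is
determined by all `N_r` responses, and each response takes at most `q^{L_Y}`
values, then `L ≤ (N_r − T) · L_Y`. -/
theorem helper_to_master_converse
    {Ω : Type} [Fintype Ω] (p : Ω → ℝ)
    (hp : ∀ ω, 0 ≤ p ω) (hp1 : ∑ ω : Ω, p ω = 1)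
    (q : ℝ) (hq : 1 < q) (L LY Nr T : ℕ) (hT : T ≤ Nr)
    {WT : Type} [Fintype WT] [DecidableEq WT] (W : Ω → WT)
    (hW : entropy p W = (L : ℝ) * Real.log q)
    {V : Type} [Fintype V] [DecidableEq V] (Y : Fin Nr → Ω → V)
    (hV : (Fintype.card V : ℝ) ≤ q ^ LY)
    (hsec : mutualInfo p W (fun ω => fun i : Fin T => Y (Fin.castLE hT i) ω) = 0)
    (hdec : condEntropy p W (fun ω => fun n : Fin Nr => Y n ω) = 0) :
    (L : ℝ) ≤ ((Nr : ℝ) - T) * LY := by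
  classical
  have hlq : 0 < Real.log q := Real.log_pos hq
  have hidx : ∀ j : Fin (Nr - T), T + j.val < Nr := fun j => by omega
  -- the random variables
  set A : Ω → (Fin T → V) := fun ω => fun i : Fin T => Y (Fin.castLE hT i) ω with hA_def
  set F : Ω → (Fin Nr → V) := fun ω => fun n : Fin Nr => Y n ω with hF_def
  set B : Ω → (Fin (Nr - T) → V) := fun ω => fun j : Fin (Nr - T) => Y ⟨T + j.val, hidx j⟩ ω
    with hB_def
  -- step 1: independence gives H(W) = H(W,A) - H(A)
  unfold mutualInfo at hsec
  unfold condEntropy at hdec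
  have h1 : entropy p W = entropy p (fun ω => (W ω, A ω)) - entropy p A := by linarith
  -- step 2: H(W,A) ≤ H(W,F) since (W,A) is a function of (W,F)
  have h2 : entropy p (fun ω => (W ω, A ω)) ≤ entropy p (fun ω => (W ω, F ω)) :=
    entropy_comp_le' p hp
      (fun wv : WT × (Fin Nr → V) => (wv.1, fun i : Fin T => wv.2 (Fin.castLE hT i)))
      (fun ω => (W ω, F ω))
  -- step 3: decodability gives H(W,F) = H(F)
  have h3 : entropy p (fun ω => (W ω, F ω)) = entropy p F := by linarith
  -- step 4: H(F) = H(A,B) via an injective relabeling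
  have hg : Function.Injective
      (fun v : Fin Nr → V =>
        ((fun i : Fin T => v (Fin.castLE hT i), fun j : Fin (Nr - T) => v ⟨T + j.val, hidx j⟩) :
          (Fin T → V) × (Fin (Nr - T) → V))) := by
    intro v v' h
    have h1' := congrArg Prod.fst h
    have h2' := congrArg Prod.snd h
    simp only at h1' h2'
    funext n
    by_cases hn : n.val < T
    · exact congrFun h1' ⟨n.val, hn⟩
    · have hj : n.val - T < Nr - T := by omega
      have h3' := congrFun h2' (⟨n.val - T, hj⟩ : Fin (Nr - T))
      simp only at h3'
      convert h3' using 2 <;> exact Fin.ext (by simp; omega)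
  have h4 : entropy p F = entropy p (fun ω => (A ω, B ω)) :=
    (entropy_comp_inj' p hg F).symm
  -- step 5: subadditivity
  have h5 : entropy p (fun ω => (A ω, B ω)) ≤ entropy p A + entropy p B :=
    entropy_pair_le_add' p hp hp1 A B
  -- step 6: cardinality bound on H(B)
  have h6 : entropy p B ≤ Real.log (Fintype.card (Fin (Nr - T) → V)) :=
    entropy_le_log_card' p hp hp1 B
  have hcard : (Fintype.card (Fin (Nr - T) → V) : ℝ) = (Fintype.card V : ℝ) ^ (Nr - T) := by
    rw [Fintype.card_fun, Fintype.card_fin]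
    push_cast
    ring
  have hlogV : Real.log (Fintype.card V) ≤ (LY : ℝ) * Real.log q := by
    rcases Nat.eq_zero_or_pos (Fintype.card V) with h0 | hpos
    · rw [h0]
      simp only [Nat.cast_zero, Real.log_zero]
      positivity
    · have hlle := Real.log_le_log (by exact_mod_cast hpos) hV
      rwa [Real.log_pow] at hlle
  have h7 : entropy p B ≤ ((Nr - T : ℕ) : ℝ) * ((LY : ℝ) * Real.log q) := by
    have : Real.log (Fintype.card (Fin (Nr - T) → V))
        = ((Nr - T : ℕ) : ℝ) * Real.log (Fintype.card V) := by
      rw [hcard, Real.log_pow]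
    rw [this] at h6
    calc entropy p B ≤ ((Nr - T : ℕ) : ℝ) * Real.log (Fintype.card V) := h6
      _ ≤ ((Nr - T : ℕ) : ℝ) * ((LY : ℝ) * Real.log q) := by
          apply mul_le_mul_of_nonneg_left hlogV (by positivity)
  -- combine
  have hfinal : (L : ℝ) * Real.log q ≤ (((Nr - T : ℕ) : ℝ) * LY) * Real.log q := by
    rw [← hW]
    calc entropy p W = entropy p (fun ω => (W ω, A ω)) - entropy p A := h1
      _ ≤ entropy p B := by linarith
      _ ≤ ((Nr - T : ℕ) : ℝ) * ((LY : ℝ) * Real.log q) := h7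
      _ = (((Nr - T : ℕ) : ℝ) * LY) * Real.log q := by ring
  have := le_of_mul_le_mul_right hfinal hlq
  rwa [Nat.cast_sub hT] at this
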